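/- Every regular hexagon H of width h > 0 can be partitioned into three congruent convex subsets, each of diameter strictly less than h. Consequently, any planar convex body of diameter h contained in H can be divided into three convex subsets of diameter strictly less than h. -/

import Mathlib

noncomputable section HexProof
open Real Set

/-- The vertices of a regular hexagon of width `h` centered at the origin:
its circumradius is `h / √3`. -/
noncomputable def hexVertex (h : ℝ) (k : Fin 6) : EuclideanSpace ℝ (Fin 2) :=
  (WithLp.equiv 2 (Fin 2 → ℝ)).symm
    ![h / Real.sqrt 3 * Real.cos (k * Real.pi / 3),
      h / Real.sqrt 3 * Real.sin (k * Real.pi / 3)]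

namespace HexAux

abbrev E2 := EuclideanSpace ℝ (Fin 2)

def pt (a b : ℝ) : E2 := (WithLp.equiv 2 (Fin 2 → ℝ)).symm ![a, b]

@[simp] lemma pt_apply0 (a b : ℝ) : pt a b 0 = a := rfl
@[simp] lemma pt_apply1 (a b : ℝ) : pt a b 1 = b := rfl

lemma s3_pos : (0:ℝ) < sqrt 3 := by positivity
lemma s3_sq : (sqrt 3)^2 = 3 := Real.sq_sqrt (by norm_num)
lemma s3_lt_two : sqrt 3 < 2 := by nlinarith [s3_sq, s3_pos]

lemma pt_congr {a b c d : ℝ} (h1 : a = c) (h2 : b = d) : pt a b = pt c d := by rw [h1, h2]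

lemma pt_eta (x : E2) : pt (x 0) (x 1) = x := by
  ext i; fin_cases i <;> rfl

lemma pt_add (a b c d : ℝ) : pt a b + pt c d = pt (a+c) (b+d) := by
  ext i; fin_cases i <;> rfl

lemma pt_smul (r a b : ℝ) : r • pt a b = pt (r*a) (r*b) := by
  ext i; fin_cases i <;> rfl

lemma hexVertex_eq (h : ℝ) (k : Fin 6) :
    hexVertex h k = pt (h / sqrt 3 * cos (k * π / 3)) (h / sqrt 3 * sin (k * π / 3)) := rfl

lemma hexV_list (h : ℝ) :
    hexVertex h 0 = pt (h / sqrt 3) 0 ∧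
    hexVertex h 1 = pt (h / (2 * sqrt 3)) (h / 2) ∧
    hexVertex h 2 = pt (-(h / (2 * sqrt 3))) (h / 2) ∧
    hexVertex h 3 = pt (-(h / sqrt 3)) 0 ∧
    hexVertex h 4 = pt (-(h / (2 * sqrt 3))) (-(h / 2)) ∧
    hexVertex h 5 = pt (h / (2 * sqrt 3)) (-(h / 2)) := by
  have hs0 := s3_pos
  have hs0' : sqrt 3 ≠ 0 := ne_of_gt hs0
  have hs := s3_sq
  refine ⟨?_, ?_, ?_, ?_, ?_, ?_⟩ <;> rw [hexVertex_eq] <;> apply pt_congr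
  · rw [show ((0:Fin 6):ℝ) = 0 by norm_cast]; norm_num
  · rw [show ((0:Fin 6):ℝ) = 0 by norm_cast]; norm_num
  · rw [show ((1:Fin 6):ℝ) = 1 by norm_cast, show (1:ℝ) * π / 3 = π/3 by ring,
      Real.cos_pi_div_three]; ring
  · rw [show ((1:Fin 6):ℝ) = 1 by norm_cast, show (1:ℝ) * π / 3 = π/3 by ring,
      Real.sin_pi_div_three]; field_simp; try ring
  · rw [show ((2:Fin 6):ℝ) = 2 by norm_cast, show (2:ℝ) * π / 3 = π - π/3 by ring,
      Real.cos_pi_sub, Real.cos_pi_div_three]; ring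
  · rw [show ((2:Fin 6):ℝ) = 2 by norm_cast, show (2:ℝ) * π / 3 = π - π/3 by ring,
      Real.sin_pi_sub, Real.sin_pi_div_three]; field_simp; try ring
  · rw [show ((3:Fin 6):ℝ) = 3 by norm_cast, show (3:ℝ) * π / 3 = π by ring, Real.cos_pi]; ring
  · rw [show ((3:Fin 6):ℝ) = 3 by norm_cast, show (3:ℝ) * π / 3 = π by ring, Real.sin_pi]; ring
  · rw [show ((4:Fin 6):ℝ) = 4 by norm_cast, show (4:ℝ) * π / 3 = π/3 + π by ring,
      Real.cos_add_pi, Real.cos_pi_div_three]; ring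
  · rw [show ((4:Fin 6):ℝ) = 4 by norm_cast, show (4:ℝ) * π / 3 = π/3 + π by ring,
      Real.sin_add_pi, Real.sin_pi_div_three]; field_simp; try ring
  · rw [show ((5:Fin 6):ℝ) = 5 by norm_cast, show (5:ℝ) * π / 3 = 2*π - π/3 by ring,
      Real.cos_two_pi_sub, Real.cos_pi_div_three]; ring
  · rw [show ((5:Fin 6):ℝ) = 5 by norm_cast, show (5:ℝ) * π / 3 = 2*π - π/3 by ring,
      Real.sin_two_pi_sub, Real.sin_pi_div_three]; field_simp; try ring

/-! ### Half-planes and sectors -/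

def HP (p q c : ℝ) : Set E2 := {x | p * x 0 + q * x 1 ≤ c}

lemma mem_HP {p q c : ℝ} {x : E2} : x ∈ HP p q c ↔ p * x 0 + q * x 1 ≤ c := Iff.rfl

lemma isLinearMap_coord (p q : ℝ) : IsLinearMap ℝ (fun x : E2 => p * x 0 + q * x 1) := by
  constructor
  · intro x y; simp [PiLp.add_apply]; ring
  · intro r x; simp [PiLp.smul_apply, smul_eq_mul]; ring

lemma convex_HP (p q c : ℝ) : Convex ℝ (HP p q c) :=
  convex_halfSpace_le (isLinearMap_coord p q) c

/-- the three 120° sectors around the origin -/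
def S1 : Set E2 := HP (-1) 0 0 ∩ HP (-1) (-(sqrt 3)) 0
def S2 : Set E2 := HP 1 0 0 ∩ HP 1 (-(sqrt 3)) 0
def S3 : Set E2 := HP (-1) (sqrt 3) 0 ∩ HP 1 (sqrt 3) 0

lemma convex_S1 : Convex ℝ S1 := (convex_HP _ _ _).inter (convex_HP _ _ _)
lemma convex_S2 : Convex ℝ S2 := (convex_HP _ _ _).inter (convex_HP _ _ _)
lemma convex_S3 : Convex ℝ S3 := (convex_HP _ _ _).inter (convex_HP _ _ _)

lemma mem_S1 {x : E2} : x ∈ S1 ↔ 0 ≤ x 0 ∧ 0 ≤ x 0 + sqrt 3 * x 1 := by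
  simp only [S1, Set.mem_inter_iff, mem_HP]; constructor <;> intro hx <;>
    exact ⟨by linarith [hx.1], by linarith [hx.2]⟩

lemma mem_S2 {x : E2} : x ∈ S2 ↔ x 0 ≤ 0 ∧ x 0 ≤ sqrt 3 * x 1 := by
  simp only [S2, Set.mem_inter_iff, mem_HP]; constructor <;> intro hx <;>
    exact ⟨by linarith [hx.1], by linarith [hx.2]⟩

lemma mem_S3 {x : E2} : x ∈ S3 ↔ sqrt 3 * x 1 ≤ x 0 ∧ x 0 + sqrt 3 * x 1 ≤ 0 := by
  simp only [S3, Set.mem_inter_iff, mem_HP]; constructor <;> intro hx <;>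
    exact ⟨by linarith [hx.1], by linarith [hx.2]⟩

lemma sector_cover (x : E2) : x ∈ S1 ∨ x ∈ S2 ∨ x ∈ S3 := by
  rcases le_or_gt 0 (x 0) with h0 | h0
  · rcases le_or_gt 0 (x 0 + sqrt 3 * x 1) with h1 | h1
    · exact Or.inl (mem_S1.2 ⟨h0, h1⟩)
    · exact Or.inr (Or.inr (mem_S3.2 ⟨by linarith, by linarith⟩))
  · rcases le_or_gt (x 0) (sqrt 3 * x 1) with h1 | h1
    · exact Or.inr (Or.inl (mem_S2.2 ⟨h0.le, h1⟩))
    · exact Or.inr (Or.inr (mem_S3.2 ⟨h1.le, by linarith⟩))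

/-! ### The hexagon and its supporting half-planes -/

def Hex (h : ℝ) : Set E2 := convexHull ℝ (Set.range (hexVertex h))

lemma convex_Hex (h : ℝ) : Convex ℝ (Hex h) := convex_convexHull ℝ _

lemma hex_in_halfplanes (h : ℝ) (hh : 0 < h) :
    Hex h ⊆ HP (sqrt 3) (-1) h ∩ HP (sqrt 3) 1 h ∩ HP 0 1 (h/2) := by
  apply convexHull_min _ (((convex_HP _ _ _).inter (convex_HP _ _ _)).inter (convex_HP _ _ _))
  rintro x ⟨k, rfl⟩
  obtain ⟨e0, e1, e2, e3, e4, e5⟩ := hexV_list h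
  have hs0 := s3_pos
  have hs0' : sqrt 3 ≠ 0 := ne_of_gt hs0
  have q1 : sqrt 3 * (h / sqrt 3) = h := by field_simp
  have q2 : sqrt 3 * (h / (2 * sqrt 3)) = h/2 := by
    field_simp
  have mem : ∀ a b : ℝ, sqrt 3 * a + -1 * b ≤ h → sqrt 3 * a + 1 * b ≤ h →
      0 * a + 1 * b ≤ h/2 →
      pt a b ∈ HP (sqrt 3) (-1) h ∩ HP (sqrt 3) 1 h ∩ HP 0 1 (h/2) := by
    intro a b h1 h2 h3
    exact ⟨⟨by simpa [mem_HP] using h1, by simpa [mem_HP] using h2⟩, by simpa [mem_HP] using h3⟩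
  fin_cases k
  · show hexVertex h 0 ∈ _
    rw [e0]; exact mem _ _ (by linarith) (by linarith) (by linarith)
  · show hexVertex h 1 ∈ _
    rw [e1]; exact mem _ _ (by linarith) (by linarith) (by linarith)
  · show hexVertex h 2 ∈ _
    rw [e2]; exact mem _ _ (by linarith) (by linarith) (by linarith)
  · show hexVertex h 3 ∈ _
    rw [e3]; exact mem _ _ (by linarith) (by linarith) (by linarith)
  · show hexVertex h 4 ∈ _
    rw [e4]; exact mem _ _ (by linarith) (by linarith) (by linarith)
  · show hexVertex h 5 ∈ _
    rw [e5]; exact mem _ _ (by linarith) (by linarith) (by linarith)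

/-! ### Rotation by 120 degrees -/

def rotFun (x : E2) : E2 := pt (-(x 0)/2 - sqrt 3 * x 1 / 2) (sqrt 3 * x 0 / 2 - x 1 / 2)
def rotInvFun (x : E2) : E2 := pt (-(x 0)/2 + sqrt 3 * x 1 / 2) (-(sqrt 3) * x 0 / 2 - x 1 / 2)

@[simp] lemma rotFun_pt (a b : ℝ) :
    rotFun (pt a b) = pt (-a/2 - sqrt 3 * b / 2) (sqrt 3 * a / 2 - b / 2) := rfl
@[simp] lemma rotInvFun_pt (a b : ℝ) :
    rotInvFun (pt a b) = pt (-a/2 + sqrt 3 * b / 2) (-(sqrt 3) * a / 2 - b / 2) := rfl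

lemma rot_left_inv : Function.LeftInverse rotInvFun rotFun := by
  intro x
  rw [show rotFun x = pt (-(x 0)/2 - sqrt 3 * x 1 / 2) (sqrt 3 * x 0 / 2 - x 1 / 2) from rfl,
    rotInvFun_pt]
  conv_rhs => rw [← pt_eta x]
  apply pt_congr
  · linear_combination (x 0 / 4) * s3_sq
  · linear_combination (x 1 / 4) * s3_sq

lemma rot_right_inv : Function.RightInverse rotInvFun rotFun := by
  intro x
  rw [show rotInvFun x = pt (-(x 0)/2 + sqrt 3 * x 1 / 2) (-(sqrt 3) * x 0 / 2 - x 1 / 2) from rfl,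
    rotFun_pt]
  conv_rhs => rw [← pt_eta x]
  apply pt_congr
  · linear_combination (x 0 / 4) * s3_sq
  · linear_combination (x 1 / 4) * s3_sq

lemma rot_dist (x y : E2) : dist (rotFun x) (rotFun y) = dist x y := by
  rw [EuclideanSpace.dist_eq, EuclideanSpace.dist_eq, Fin.sum_univ_two, Fin.sum_univ_two]
  congr 1
  simp only [rotFun, pt_apply0, pt_apply1, Real.dist_eq, sq_abs]
  linear_combination ((x 0 - y 0)^2/4 + (x 1 - y 1)^2/4) * s3_sq

def rotIso : E2 ≃ᵢ E2 :=
  ⟨⟨rotFun, rotInvFun, rot_left_inv, rot_right_inv⟩, Isometry.of_dist_eq rot_dist⟩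

@[simp] lemma rotIso_apply (x : E2) : rotIso x = rotFun x := rfl

lemma rot_injective : Function.Injective rotFun := rot_left_inv.injective

lemma rot_linear : IsLinearMap ℝ rotFun := by
  constructor
  · intro x y
    rw [show rotFun (x + y)
        = pt (-((x+y) 0)/2 - sqrt 3 * (x+y) 1 / 2) (sqrt 3 * (x+y) 0 / 2 - (x+y) 1 / 2) from rfl,
      show rotFun x = pt (-(x 0)/2 - sqrt 3 * x 1 / 2) (sqrt 3 * x 0 / 2 - x 1 / 2) from rfl,
      show rotFun y = pt (-(y 0)/2 - sqrt 3 * y 1 / 2) (sqrt 3 * y 0 / 2 - y 1 / 2) from rfl,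
      pt_add]
    have h0 : (x + y) 0 = x 0 + y 0 := rfl
    have h1 : (x + y) 1 = x 1 + y 1 := rfl
    apply pt_congr <;> rw [h0, h1] <;> ring
  · intro r x
    rw [show rotFun (r • x)
        = pt (-((r•x) 0)/2 - sqrt 3 * (r•x) 1 / 2) (sqrt 3 * (r•x) 0 / 2 - (r•x) 1 / 2) from rfl,
      show rotFun x = pt (-(x 0)/2 - sqrt 3 * x 1 / 2) (sqrt 3 * x 0 / 2 - x 1 / 2) from rfl,
      pt_smul]
    have h0 : (r • x) 0 = r * x 0 := rfl
    have h1 : (r • x) 1 = r * x 1 := rfl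
    apply pt_congr <;> rw [h0, h1] <;> ring

/-! rotation maps vertices, hexagon and sectors around -/

lemma rot_vertex (h : ℝ) (k : Fin 6) : rotFun (hexVertex h k) = hexVertex h (k + 2) := by
  obtain ⟨e0, e1, e2, e3, e4, e5⟩ := hexV_list h
  have hs0 := s3_pos
  have hs0' : sqrt 3 ≠ 0 := ne_of_gt hs0
  have hs := s3_sq
  have q3 : h / sqrt 3 = sqrt 3 * h / 3 := by
    rw [div_eq_div_iff hs0' (by norm_num : (3:ℝ) ≠ 0)]; linear_combination -h * hs
  have q4 : h / (2 * sqrt 3) = sqrt 3 * h / 6 := by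
    rw [div_eq_div_iff (by positivity : (2:ℝ) * sqrt 3 ≠ 0) (by norm_num : (6:ℝ) ≠ 0)]
    linear_combination -2 * h * hs
  fin_cases k
  · show rotFun (hexVertex h 0) = hexVertex h 2
    rw [e0, e2, rotFun_pt]; simp only [q3, q4]; apply pt_congr
    · ring
    · linear_combination (h/6) * hs
  · show rotFun (hexVertex h 1) = hexVertex h 3
    rw [e1, e3, rotFun_pt]; simp only [q3, q4]; apply pt_congr
    · ring
    · linear_combination (h/12) * hs
  · show rotFun (hexVertex h 2) = hexVertex h 4
    rw [e2, e4, rotFun_pt]; simp only [q3, q4]; apply pt_congr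
    · ring
    · linear_combination (-h/12) * hs
  · show rotFun (hexVertex h 3) = hexVertex h 5
    rw [e3, e5, rotFun_pt]; simp only [q3, q4]; apply pt_congr
    · ring
    · linear_combination (-h/6) * hs
  · show rotFun (hexVertex h 4) = hexVertex h 0
    rw [e4, e0, rotFun_pt]; simp only [q3, q4]; apply pt_congr
    · ring
    · linear_combination (-h/12) * hs
  · show rotFun (hexVertex h 5) = hexVertex h 1
    rw [e5, e1, rotFun_pt]; simp only [q3, q4]; apply pt_congr
    · ring
    · linear_combination (h/12) * hs

lemma rot_range (h : ℝ) : rotFun '' (Set.range (hexVertex h)) = Set.range (hexVertex h) := by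
  apply Set.Subset.antisymm
  · rintro _ ⟨_, ⟨k, rfl⟩, rfl⟩; exact ⟨k + 2, (rot_vertex h k).symm⟩
  · rintro _ ⟨k, rfl⟩
    refine ⟨hexVertex h (k + 2 + 2), ⟨_, rfl⟩, ?_⟩
    rw [rot_vertex]
    have hk : k + 2 + 2 + 2 = k := by revert k; decide
    rw [hk]

lemma rot_Hex (h : ℝ) : rotFun '' Hex h = Hex h := by
  unfold Hex
  rw [rot_linear.image_convexHull, rot_range]

lemma rot_S1 : rotFun '' S1 = S2 := by
  apply Set.Subset.antisymm
  · rintro _ ⟨x, hx, rfl⟩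
    obtain ⟨h1, h2⟩ := mem_S1.1 hx
    rw [show rotFun x = pt (-(x 0)/2 - sqrt 3 * x 1 / 2) (sqrt 3 * x 0 / 2 - x 1 / 2) from rfl]
    refine mem_S2.2 ⟨?_, ?_⟩ <;> simp only [pt_apply0, pt_apply1] <;>
      nlinarith [s3_sq, s3_pos]
  · intro x hx
    obtain ⟨h1, h2⟩ := mem_S2.1 hx
    refine ⟨rotInvFun x, ?_, rot_right_inv x⟩
    rw [show rotInvFun x
        = pt (-(x 0)/2 + sqrt 3 * x 1 / 2) (-(sqrt 3) * x 0 / 2 - x 1 / 2) from rfl]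
    refine mem_S1.2 ⟨?_, ?_⟩ <;> simp only [pt_apply0, pt_apply1] <;>
      nlinarith [s3_sq, s3_pos]

lemma rot_S2 : rotFun '' S2 = S3 := by
  apply Set.Subset.antisymm
  · rintro _ ⟨x, hx, rfl⟩
    obtain ⟨h1, h2⟩ := mem_S2.1 hx
    rw [show rotFun x = pt (-(x 0)/2 - sqrt 3 * x 1 / 2) (sqrt 3 * x 0 / 2 - x 1 / 2) from rfl]
    refine mem_S3.2 ⟨?_, ?_⟩ <;> simp only [pt_apply0, pt_apply1] <;>
      nlinarith [s3_sq, s3_pos]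
  · intro x hx
    obtain ⟨h1, h2⟩ := mem_S3.1 hx
    refine ⟨rotInvFun x, ?_, rot_right_inv x⟩
    rw [show rotInvFun x
        = pt (-(x 0)/2 + sqrt 3 * x 1 / 2) (-(sqrt 3) * x 0 / 2 - x 1 / 2) from rfl]
    refine mem_S2.2 ⟨?_, ?_⟩ <;> simp only [pt_apply0, pt_apply1] <;>
      nlinarith [s3_sq, s3_pos]

/-! ### The three pieces -/

def P1 (h : ℝ) : Set E2 := Hex h ∩ S1
def P2 (h : ℝ) : Set E2 := Hex h ∩ S2
def P3 (h : ℝ) : Set E2 := Hex h ∩ S3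

lemma rot_P1 (h : ℝ) : rotFun '' P1 h = P2 h := by
  unfold P1 P2
  rw [Set.image_inter rot_injective, rot_Hex, rot_S1]

lemma rot_P2 (h : ℝ) : rotFun '' P2 h = P3 h := by
  unfold P2 P3
  rw [Set.image_inter rot_injective, rot_Hex, rot_S2]

lemma Hex_eq_union (h : ℝ) : Hex h = P1 h ∪ P2 h ∪ P3 h := by
  apply Set.Subset.antisymm
  · intro x hx
    rcases sector_cover x with h1 | h2 | h3
    · exact Or.inl (Or.inl ⟨hx, h1⟩)
    · exact Or.inl (Or.inr ⟨hx, h2⟩)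
    · exact Or.inr ⟨hx, h3⟩
  · rintro x ((⟨hx, _⟩ | ⟨hx, _⟩) | ⟨hx, _⟩) <;> exact hx

/-- the key quadratic estimate -/
lemma key_quad (h u b : ℝ)
    (M1 : u - b ≤ h) (M2 : u + b ≤ h) (M3 : b ≤ h/2) (M4 : 0 ≤ u) (M5 : 0 ≤ u + 3*b) :
    8*u^2 + 24*b^2 - 6*h*(u+b) - 3*h^2 ≤ 0 := by
  nlinarith [mul_nonneg (sub_nonneg.2 M1) M5, mul_nonneg (sub_nonneg.2 M3) M4,
    mul_nonneg (sub_nonneg.2 M2) M5, mul_nonneg (sub_nonneg.2 M2) M4,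
    mul_nonneg (sub_nonneg.2 M1) M4, mul_nonneg (sub_nonneg.2 M3) M5,
    mul_nonneg (sub_nonneg.2 M1) (sub_nonneg.2 M3),
    mul_nonneg (sub_nonneg.2 M2) (sub_nonneg.2 M3),
    mul_nonneg (sub_nonneg.2 M1) (sub_nonneg.2 M2)]

lemma P1_subset_ball (h : ℝ) (hh : 0 < h) :
    P1 h ⊆ Metric.closedBall (pt (sqrt 3 * h / 8) (h/8)) (sqrt 3 * h / 4) := by
  rintro x ⟨hxH, hxS⟩
  obtain ⟨⟨hp1, hp2⟩, hp3⟩ := hex_in_halfplanes h hh hxH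
  obtain ⟨hq1, hq2⟩ := mem_S1.1 hxS
  rw [mem_HP] at hp1 hp2 hp3
  have hs := s3_sq
  have hs0 := s3_pos
  set a := x 0
  set b := x 1
  have M4 : 0 ≤ sqrt 3 * a := mul_nonneg hs0.le hq1
  have M5 : 0 ≤ sqrt 3 * a + 3 * b := by nlinarith [mul_nonneg hs0.le hq2]
  have key := key_quad h (sqrt 3 * a) b (by linarith) (by linarith) (by linarith) M4 M5
  have e1 : (sqrt 3 * a)^2 = 3 * a^2 := by rw [mul_pow, hs]
  have e2 : (sqrt 3 * (h/8))^2 = 3 * (h/8)^2 := by rw [mul_pow, hs]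
  rw [Metric.mem_closedBall, EuclideanSpace.dist_eq, Fin.sum_univ_two]
  have hbound : (dist (x 0) (pt (sqrt 3 * h / 8) (h/8) 0))^2
      + (dist (x 1) (pt (sqrt 3 * h / 8) (h/8) 1))^2 ≤ (sqrt 3 * h / 4)^2 := by
    simp only [pt_apply0, pt_apply1, Real.dist_eq, sq_abs]
    have e3 : (a - sqrt 3 * h / 8)^2
        = a^2 - (sqrt 3 * a) * h/4 + 3 * h^2/64 := by nlinarith [hs]
    have e4 : (sqrt 3 * h / 4)^2 = 3 * h^2 / 16 := by nlinarith [hs]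
    rw [e3, e4]
    nlinarith [key, e1]
  calc √((dist (x 0) (pt (sqrt 3 * h / 8) (h/8) 0))^2
        + (dist (x 1) (pt (sqrt 3 * h / 8) (h/8) 1))^2)
      ≤ √((sqrt 3 * h / 4)^2) := Real.sqrt_le_sqrt hbound
    _ = sqrt 3 * h / 4 := Real.sqrt_sq (by positivity)

lemma diam_P1 (h : ℝ) (hh : 0 < h) : Metric.diam (P1 h) < h := by
  have h1 : Metric.diam (P1 h) ≤ sqrt 3 * h / 2 := by
    have := Metric.diam_mono (P1_subset_ball h hh) Metric.isBounded_closedBall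
    calc Metric.diam (P1 h) ≤ Metric.diam (Metric.closedBall (pt (sqrt 3 * h / 8) (h/8))
          (sqrt 3 * h / 4)) := this
      _ ≤ 2 * (sqrt 3 * h / 4) := Metric.diam_closedBall (by positivity)
      _ = sqrt 3 * h / 2 := by ring
  have : sqrt 3 * h / 2 < h := by nlinarith [s3_lt_two, hh]
  linarith

lemma bounded_P1 (h : ℝ) (hh : 0 < h) : Bornology.IsBounded (P1 h) :=
  Metric.isBounded_closedBall.subset (P1_subset_ball h hh)

lemma diam_P2 (h : ℝ) (hh : 0 < h) : Metric.diam (P2 h) < h := by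
  rw [← rot_P1, show rotFun = ⇑rotIso from rfl, rotIso.isometry.diam_image]
  exact diam_P1 h hh

lemma diam_P3 (h : ℝ) (hh : 0 < h) : Metric.diam (P3 h) < h := by
  rw [← rot_P2, ← rot_P1, show rotFun = ⇑rotIso from rfl, rotIso.isometry.diam_image,
    rotIso.isometry.diam_image]
  exact diam_P1 h hh

lemma bounded_P2 (h : ℝ) (hh : 0 < h) : Bornology.IsBounded (P2 h) := by
  rw [← rot_P1, show rotFun = ⇑rotIso from rfl]
  exact rotIso.isometry.lipschitz.isBounded_image (bounded_P1 h hh)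

lemma bounded_P3 (h : ℝ) (hh : 0 < h) : Bornology.IsBounded (P3 h) := by
  rw [← rot_P2, show rotFun = ⇑rotIso from rfl]
  exact rotIso.isometry.lipschitz.isBounded_image (bounded_P2 h hh)

lemma convex_P1 (h : ℝ) : Convex ℝ (P1 h) := (convex_Hex h).inter convex_S1
lemma convex_P2 (h : ℝ) : Convex ℝ (P2 h) := (convex_Hex h).inter convex_S2
lemma convex_P3 (h : ℝ) : Convex ℝ (P3 h) := (convex_Hex h).inter convex_S3

/-- convexity is preserved by isometry equivalences of the plane -/
lemma convex_iso_image (f : E2 ≃ᵢ E2) {s : Set E2} (hs : Convex ℝ s) : Convex ℝ (f '' s) := by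
  rw [← IsometryEquiv.coeFn_toRealAffineIsometryEquiv f]
  exact hs.affine_image f.toRealAffineIsometryEquiv.toAffineIsometry.toAffineMap

end HexAux

open HexAux in
theorem hexagon_three_congruent_pieces (h : ℝ) (hh : 0 < h)
    (f : EuclideanSpace ℝ (Fin 2) ≃ᵢ EuclideanSpace ℝ (Fin 2))
    (H : Set (EuclideanSpace ℝ (Fin 2)))
    (hH : H = f '' convexHull ℝ (Set.range (hexVertex h))) :
    (∃ H₁ H₂ H₃ : Set (EuclideanSpace ℝ (Fin 2)),
      H = H₁ ∪ H₂ ∪ H₃ ∧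
      Convex ℝ H₁ ∧ Convex ℝ H₂ ∧ Convex ℝ H₃ ∧
      Metric.diam H₁ < h ∧ Metric.diam H₂ < h ∧ Metric.diam H₃ < h ∧
      (∃ g : EuclideanSpace ℝ (Fin 2) ≃ᵢ EuclideanSpace ℝ (Fin 2), g '' H₁ = H₂) ∧
      (∃ g : EuclideanSpace ℝ (Fin 2) ≃ᵢ EuclideanSpace ℝ (Fin 2), g '' H₁ = H₃)) ∧
    ∀ C : Set (EuclideanSpace ℝ (Fin 2)), IsCompact C → Convex ℝ C →
      Metric.diam C = h → C ⊆ H →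
      ∃ C₁ C₂ C₃ : Set (EuclideanSpace ℝ (Fin 2)), C = C₁ ∪ C₂ ∪ C₃ ∧
        Convex ℝ C₁ ∧ Convex ℝ C₂ ∧ Convex ℝ C₃ ∧
        Metric.diam C₁ < h ∧ Metric.diam C₂ < h ∧ Metric.diam C₃ < h := by
  have hHex : H = f '' Hex h := hH
  have hsplit : H = f '' P1 h ∪ f '' P2 h ∪ f '' P3 h := by
    rw [hHex, Hex_eq_union, Set.image_union, Set.image_union]
  have hdiam1 : Metric.diam (f '' P1 h) < h := by
    rw [f.isometry.diam_image]; exact diam_P1 h hh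
  have hdiam2 : Metric.diam (f '' P2 h) < h := by
    rw [f.isometry.diam_image]; exact diam_P2 h hh
  have hdiam3 : Metric.diam (f '' P3 h) < h := by
    rw [f.isometry.diam_image]; exact diam_P3 h hh
  have hconv1 : Convex ℝ (f '' P1 h) := convex_iso_image f (convex_P1 h)
  have hconv2 : Convex ℝ (f '' P2 h) := convex_iso_image f (convex_P2 h)
  have hconv3 : Convex ℝ (f '' P3 h) := convex_iso_image f (convex_P3 h)
  constructor
  · refine ⟨f '' P1 h, f '' P2 h, f '' P3 h, hsplit, hconv1, hconv2, hconv3,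
      hdiam1, hdiam2, hdiam3, ?_, ?_⟩
    · refine ⟨(f.symm.trans rotIso).trans f, ?_⟩
      have h12 : rotIso '' P1 h = P2 h := rot_P1 h
      rw [Set.image_image]
      simp only [IsometryEquiv.trans_apply, IsometryEquiv.symm_apply_apply]
      rw [show (fun x => f (rotIso x)) '' P1 h = f '' (rotIso '' P1 h) from
        (Set.image_image _ _ _).symm, h12]
    · refine ⟨(f.symm.trans (rotIso.trans rotIso)).trans f, ?_⟩
      have h13 : rotIso '' (rotIso '' P1 h) = P3 h := by
        rw [show rotIso '' P1 h = P2 h from rot_P1 h]; exact rot_P2 h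
      rw [Set.image_image]
      simp only [IsometryEquiv.trans_apply, IsometryEquiv.symm_apply_apply]
      rw [show (fun x => f (rotIso (rotIso x))) '' P1 h
          = f '' (rotIso '' (rotIso '' P1 h)) by
        rw [Set.image_image, Set.image_image], h13]
  · intro C _hCcpt hCconv _hCdiam hCH
    refine ⟨C ∩ f '' P1 h, C ∩ f '' P2 h, C ∩ f '' P3 h, ?_, hCconv.inter hconv1,
      hCconv.inter hconv2, hCconv.inter hconv3, ?_, ?_, ?_⟩
    · rw [← Set.inter_union_distrib_left, ← Set.inter_union_distrib_left, ← hsplit]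
      exact (Set.inter_eq_left.2 hCH).symm
    · exact lt_of_le_of_lt (Metric.diam_mono Set.inter_subset_right
        (f.isometry.lipschitz.isBounded_image (bounded_P1 h hh))) hdiam1
    · exact lt_of_le_of_lt (Metric.diam_mono Set.inter_subset_right
        (f.isometry.lipschitz.isBounded_image (bounded_P2 h hh))) hdiam2
    · exact lt_of_le_of_lt (Metric.diam_mono Set.inter_subset_right
        (f.isometry.lipschitz.isBounded_image (bounded_P3 h hh))) hdiam3

end HexProof
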